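/- Every action of a finitely generated group on ℝ by orientation-preserving homeomorphisms without global fixed point is topologically conjugated to an action ρ by bilipschitz homeomorphisms for which there exist constants K ≥ 1 and 0 < C < D and a finite symmetric generating set 𝒢' such that every ρ(g), g ∈ 𝒢', is K-bilipschitz and for every x ∈ ℝ: x - D ≤ min_{g∈𝒢'} ρ(g)(x) ≤ x - C and x + C ≤ max_{g∈𝒢'} ρ(g)(x) ≤ x + D. -/

import Mathlib

set_option maxHeartbeats 1000000

noncomputable section

noncomputable instance : Group (ℝ ≃ₜ ℝ) where
  mul f g := g.trans f
  one := Homeomorph.refl ℝ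
  inv := Homeomorph.symm
  mul_assoc f g h := rfl
  one_mul f := by ext x; rfl
  mul_one f := by ext x; rfl
  inv_mul_cancel f := by ext x; exact f.symm_apply_apply x

lemma hmul_apply (f g : ℝ ≃ₜ ℝ) (x : ℝ) : (f * g) x = f (g x) := rfl
lemma hone_apply (x : ℝ) : (1 : ℝ ≃ₜ ℝ) x = x := rfl
lemma hinv_apply (f : ℝ ≃ₜ ℝ) (x : ℝ) : (f⁻¹) x = f.symm x := rfl
lemma hinv_apply_apply (f : ℝ ≃ₜ ℝ) (x : ℝ) : f⁻¹ (f x) = x := f.symm_apply_apply x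
lemma happly_inv_apply (f : ℝ ≃ₜ ℝ) (x : ℝ) : f (f⁻¹ x) = x := f.apply_symm_apply x

lemma monotone_inv_of_monotone {f : ℝ ≃ₜ ℝ} (hf : Monotone ⇑f) : Monotone ⇑f⁻¹ := by
  have hsm : StrictMono ⇑f := hf.strictMono_of_injective f.injective
  intro a b hab
  rw [← hsm.le_iff_le, happly_inv_apply, happly_inv_apply]
  exact hab

/-- The subgroup of monotone homeomorphisms of ℝ. -/
def Smono : Subgroup (ℝ ≃ₜ ℝ) where
  carrier := {f | Monotone ⇑f}
  mul_mem' := by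
    intro f g hf hg
    intro a b hab
    exact hf (hg hab)
  one_mem' := monotone_id
  inv_mem' := by
    intro f hf
    exact monotone_inv_of_monotone hf

lemma Smono_mono {f : ℝ ≃ₜ ℝ} (hf : f ∈ Smono) : Monotone ⇑f := hf
lemma Smono_strictMono {f : ℝ ≃ₜ ℝ} (hf : f ∈ Smono) : StrictMono ⇑f :=
  (Smono_mono hf).strictMono_of_injective f.injective

structure Gen where
  S : Finset (ℝ ≃ₜ ℝ)
  hne : S.Nonempty
  hmonoS : ∀ g ∈ S, Monotone ⇑g
  hinvS : ∀ g ∈ S, g⁻¹ ∈ S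
  hmove : ∀ z : ℝ, ∃ g ∈ S, z < g z

namespace Gen

variable (Γ : Gen)

/-- sup of generators -/
def tau (z : ℝ) : ℝ := Γ.S.sup' Γ.hne (fun g => g z)

lemma le_tau {g : ℝ ≃ₜ ℝ} (hg : g ∈ Γ.S) (z : ℝ) : g z ≤ Γ.tau z :=
  Finset.le_sup' (fun g => g z) hg

lemma strictMono_of_mem {g : ℝ ≃ₜ ℝ} (hg : g ∈ Γ.S) : StrictMono ⇑g :=
  (Γ.hmonoS g hg).strictMono_of_injective g.injective

lemma lt_tau (z : ℝ) : z < Γ.tau z := by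
  obtain ⟨g, hg, hgz⟩ := Γ.hmove z
  exact lt_of_lt_of_le hgz (Γ.le_tau hg z)

lemma tau_strictMono : StrictMono Γ.tau := by
  intro a b hab
  rw [tau, Finset.sup'_lt_iff]
  intro g hg
  exact lt_of_lt_of_le (Γ.strictMono_of_mem hg hab) (Γ.le_tau hg b)

lemma tau_surjective : Function.Surjective Γ.tau := by
  intro y
  refine ⟨Γ.S.inf' Γ.hne (fun g => g⁻¹ y), le_antisymm ?_ ?_⟩
  · rw [tau, Finset.sup'_le_iff]
    intro g hg
    have h1 : Γ.S.inf' Γ.hne (fun g => g⁻¹ y) ≤ g⁻¹ y := Finset.inf'_le _ hg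
    have := Γ.hmonoS g hg h1
    rwa [happly_inv_apply] at this
  · obtain ⟨g, hg, hgy⟩ := Finset.exists_mem_eq_inf' Γ.hne (fun g => (g⁻¹) y)
    have h2 : g (Γ.S.inf' Γ.hne fun g => g⁻¹ y) = y := by rw [hgy, happly_inv_apply]
    have h3 := Γ.le_tau hg (Γ.S.inf' Γ.hne fun g => g⁻¹ y)
    rwa [h2] at h3

/-- `T` is the homeomorphism `z ↦ max_{g ∈ S} g z`. -/
def T : ℝ ≃ₜ ℝ :=
  (StrictMono.orderIsoOfSurjective Γ.tau Γ.tau_strictMono Γ.tau_surjective).toHomeomorph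

lemma T_apply (z : ℝ) : Γ.T z = Γ.tau z := rfl

lemma T_mem_Smono : Γ.T ∈ Smono := Γ.tau_strictMono.monotone

lemma lt_T (z : ℝ) : z < Γ.T z := Γ.lt_tau z

lemma le_T {g : ℝ ≃ₜ ℝ} (hg : g ∈ Γ.S) (z : ℝ) : g z ≤ Γ.T z := Γ.le_tau hg z

lemma Tinv_le {g : ℝ ≃ₜ ℝ} (hg : g ∈ Γ.S) (z : ℝ) : Γ.T⁻¹ z ≤ g z := by
  have h1 : z ≤ Γ.T (g z) := by
    have := Γ.le_tau (Γ.hinvS g hg) (g z)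
    rwa [hinv_apply_apply] at this
  have h2 := monotone_inv_of_monotone (Smono_mono Γ.T_mem_Smono) h1
  rwa [hinv_apply_apply] at h2

lemma Tinv_lt (z : ℝ) : Γ.T⁻¹ z < z := by
  have := Γ.lt_T (Γ.T⁻¹ z)
  rwa [happly_inv_apply] at this

lemma zpow_mem_Smono (n : ℤ) : (Γ.T ^ n) ∈ Smono := zpow_mem Γ.T_mem_Smono n

lemma exists_sup_attained (z : ℝ) : ∃ g ∈ Γ.S, g z = Γ.T z := by
  obtain ⟨g, hg, hgz⟩ := Finset.exists_mem_eq_sup' Γ.hne (fun g => g z)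
  exact ⟨g, hg, hgz.symm⟩

end Gen

namespace Gen

variable (Γ : Gen)

/-- the `T`-orbit of `0`. -/
def a (n : ℤ) : ℝ := (Γ.T ^ n) 0

lemma a_succ (n : ℤ) : Γ.a (n + 1) = Γ.T (Γ.a n) := by
  rw [a, a, ← hmul_apply, ← zpow_one_add Γ.T n]
  ring_nf

lemma a_strictMono : StrictMono Γ.a := by
  apply strictMono_int_of_lt_succ
  intro n
  rw [a_succ]
  exact Γ.lt_T _

lemma a_neg_succ (k : ℤ) : Γ.a (-(k + 1)) = Γ.T⁻¹ (Γ.a (-k)) := by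
  rw [a, a, ← hmul_apply]
  congr 1
  rw [show (-(k+1) : ℤ) = (-1) + (-k) by ring, zpow_add, zpow_neg_one]

lemma exists_a_gt (x : ℝ) : ∃ n : ℤ, x < Γ.a n := by
  by_contra hcon
  push_neg at hcon
  set c : ℕ → ℝ := fun k => Γ.a k with hc
  have hmono : Monotone c := fun i j hij => (Γ.a_strictMono.monotone (by exact_mod_cast hij))
  have hbdd : BddAbove (Set.range c) := ⟨x, by rintro _ ⟨k, rfl⟩; exact hcon k⟩
  set L := ⨆ k, c k with hL
  have h1 : Filter.Tendsto c Filter.atTop (nhds L) := tendsto_atTop_ciSup hmono hbdd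
  have h2 : Filter.Tendsto (fun k => c (k + 1)) Filter.atTop (nhds L) :=
    h1.comp (Filter.tendsto_add_atTop_nat 1)
  have h3 : Filter.Tendsto (fun k => Γ.T (c k)) Filter.atTop (nhds (Γ.T L)) :=
    (Γ.T.continuous.tendsto L).comp h1
  have h4 : (fun k => c (k + 1)) = fun k => Γ.T (c k) := by
    funext k
    have : ((k : ℤ) + 1) = ((k + 1 : ℕ) : ℤ) := by push_cast; ring
    rw [hc]
    simp only []
    rw [← this, Γ.a_succ k]
  rw [h4] at h2
  have : Γ.T L = L := tendsto_nhds_unique h3 h2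
  exact absurd this (ne_of_gt (Γ.lt_T L))

lemma exists_a_le (x : ℝ) : ∃ n : ℤ, Γ.a n ≤ x := by
  by_contra hcon
  push_neg at hcon
  set c : ℕ → ℝ := fun k => Γ.a (-k) with hc
  have hanti : Antitone c := by
    intro i j hij
    exact Γ.a_strictMono.monotone (by exact_mod_cast neg_le_neg (by exact_mod_cast hij))
  have hbdd : BddBelow (Set.range c) := ⟨x, by rintro _ ⟨k, rfl⟩; exact (hcon _).le⟩
  set L := ⨅ k, c k with hL
  have h1 : Filter.Tendsto c Filter.atTop (nhds L) := tendsto_atTop_ciInf hanti hbdd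
  have h2 : Filter.Tendsto (fun k => c (k + 1)) Filter.atTop (nhds L) :=
    h1.comp (Filter.tendsto_add_atTop_nat 1)
  have h3 : Filter.Tendsto (fun k => Γ.T⁻¹ (c k)) Filter.atTop (nhds (Γ.T⁻¹ L)) :=
    ((Γ.T⁻¹).continuous.tendsto L).comp h1
  have h4 : (fun k => c (k + 1)) = fun k => Γ.T⁻¹ (c k) := by
    funext k
    have : (-((k : ℤ) + 1)) = -((k + 1 : ℕ) : ℤ) := by push_cast; ring
    rw [hc]
    simp only []
    rw [← this, Γ.a_neg_succ k]
  rw [h4] at h2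
  have h5 : Γ.T⁻¹ L = L := tendsto_nhds_unique h3 h2
  have : Γ.T L = L := by
    conv_lhs => rw [← h5]
    exact happly_inv_apply Γ.T L
  exact absurd this (ne_of_gt (Γ.lt_T L))

lemma exists_N (x : ℝ) : ∃ n : ℤ, (Γ.a n ≤ x ∧ ∀ m : ℤ, Γ.a m ≤ x → m ≤ n) := by
  obtain ⟨b, hb⟩ := Γ.exists_a_gt x
  obtain ⟨n0, hn0⟩ := Γ.exists_a_le x
  have hbdd : ∃ c : ℤ, ∀ z : ℤ, Γ.a z ≤ x → z ≤ c := by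
    refine ⟨b, fun z hz => ?_⟩
    by_contra hzb
    push_neg at hzb
    exact absurd (lt_of_le_of_lt (le_trans (Γ.a_strictMono.monotone hzb.le) hz) hb)
      (lt_irrefl _)
  obtain ⟨lub, hlub1, hlub2⟩ := Int.exists_greatest_of_bdd hbdd ⟨n0, hn0⟩
  exact ⟨lub, hlub1, hlub2⟩

/-- `N x` is the unique `n` with `a n ≤ x < a (n+1)`. -/
def N (x : ℝ) : ℤ := (Γ.exists_N x).choose

lemma a_N_le (x : ℝ) : Γ.a (Γ.N x) ≤ x := (Γ.exists_N x).choose_spec.1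

lemma le_N {m : ℤ} {x : ℝ} (h : Γ.a m ≤ x) : m ≤ Γ.N x := (Γ.exists_N x).choose_spec.2 m h

lemma lt_a_N_succ (x : ℝ) : x < Γ.a (Γ.N x + 1) := by
  by_contra hcon
  push_neg at hcon
  exact absurd (Γ.le_N hcon) (by omega)

lemma N_eq {n : ℤ} {x : ℝ} (h1 : Γ.a n ≤ x) (h2 : x < Γ.a (n + 1)) : Γ.N x = n := by
  have := Γ.le_N h1
  have h3 := Γ.a_N_le x
  have h4 : Γ.N x < n + 1 := by
    by_contra hc
    push_neg at hc
    exact absurd (lt_of_le_of_lt (le_trans (Γ.a_strictMono.monotone hc) h3) h2) (lt_irrefl _)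
  omega

end Gen

namespace Gen

variable (Γ : Gen)

lemma zpow_apply_zpow (m k : ℤ) (z : ℝ) : (Γ.T ^ m) ((Γ.T ^ k) z) = (Γ.T ^ (m + k)) z := by
  rw [← hmul_apply, ← zpow_add]

lemma zpow_neg_apply_zpow (n : ℤ) (z : ℝ) : (Γ.T ^ (-n)) ((Γ.T ^ n) z) = z := by
  rw [zpow_apply_zpow, neg_add_cancel, zpow_zero]
  exact hone_apply z

lemma T0_pos : 0 < Γ.T 0 := Γ.lt_T 0

/-- The equivariant gauge: a homeomorphism conjugating `T` to the unit translation. -/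
def psi (x : ℝ) : ℝ := Γ.N x + (Γ.T ^ (-(Γ.N x))) x / Γ.T 0

lemma loc_nonneg (x : ℝ) : 0 ≤ (Γ.T ^ (-(Γ.N x))) x := by
  have h1 := Smono_mono (Γ.zpow_mem_Smono (-(Γ.N x))) (Γ.a_N_le x)
  rwa [a, zpow_neg_apply_zpow] at h1

lemma loc_lt (x : ℝ) : (Γ.T ^ (-(Γ.N x))) x < Γ.T 0 := by
  have h1 := Smono_strictMono (Γ.zpow_mem_Smono (-(Γ.N x))) (Γ.lt_a_N_succ x)
  rwa [a, zpow_apply_zpow, show (-(Γ.N x) + (Γ.N x + 1) : ℤ) = 1 by ring, zpow_one] at h1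

lemma psi_lb (x : ℝ) : (Γ.N x : ℝ) ≤ Γ.psi x := by
  rw [psi]
  have := div_nonneg (Γ.loc_nonneg x) (Γ.T0_pos).le
  linarith

lemma psi_ub (x : ℝ) : Γ.psi x < Γ.N x + 1 := by
  rw [psi]
  have := (div_lt_one (Γ.T0_pos)).2 (Γ.loc_lt x)
  linarith

lemma psi_strictMono : StrictMono Γ.psi := by
  intro x y hxy
  have hNle : Γ.N x ≤ Γ.N y := Γ.le_N (le_trans (Γ.a_N_le x) hxy.le)
  rcases eq_or_lt_of_le hNle with heq | hlt
  · rw [psi, psi, ← heq]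
    have h2 : (Γ.T ^ (-(Γ.N x))) x < (Γ.T ^ (-(Γ.N x))) y :=
      Smono_strictMono (Γ.zpow_mem_Smono _) hxy
    have ht := Γ.T0_pos
    gcongr
  · calc Γ.psi x < Γ.N x + 1 := Γ.psi_ub x
    _ ≤ (Γ.N y : ℝ) := by exact_mod_cast hlt
    _ ≤ Γ.psi y := Γ.psi_lb y

lemma N_T (x : ℝ) : Γ.N (Γ.T x) = Γ.N x + 1 := by
  apply Γ.N_eq
  · rw [a_succ]
    exact Smono_mono Γ.T_mem_Smono (Γ.a_N_le x)
  · rw [a_succ]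
    exact Smono_strictMono Γ.T_mem_Smono (Γ.lt_a_N_succ x)

lemma psi_T (x : ℝ) : Γ.psi (Γ.T x) = Γ.psi x + 1 := by
  rw [psi, psi, N_T]
  have h1 : (Γ.T ^ (-(Γ.N x + 1))) (Γ.T x) = (Γ.T ^ (-(Γ.N x))) x := by
    conv_lhs => rw [show Γ.T x = (Γ.T ^ (1:ℤ)) x by rw [zpow_one]]
    rw [zpow_apply_zpow, show (-(Γ.N x + 1) + 1 : ℤ) = -(Γ.N x) by ring]
  rw [h1]
  push_cast
  ring

lemma psi_surjective : Function.Surjective Γ.psi := by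
  intro y
  refine ⟨(Γ.T ^ (⌊y⌋ : ℤ)) ((y - ⌊y⌋) * Γ.T 0), ?_⟩
  have hfr0 : (0:ℝ) ≤ (y - ⌊y⌋) * Γ.T 0 :=
    mul_nonneg (by linarith [Int.floor_le y]) Γ.T0_pos.le
  have hfr1 : (y - ⌊y⌋) * Γ.T 0 < Γ.T 0 := by
    have : (y - ⌊y⌋ : ℝ) < 1 := by linarith [Int.lt_floor_add_one y]
    nlinarith [Γ.T0_pos]
  have hN : Γ.N ((Γ.T ^ (⌊y⌋ : ℤ)) ((y - ⌊y⌋) * Γ.T 0)) = ⌊y⌋ := by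
    apply Γ.N_eq
    · rw [a]
      exact Smono_mono (Γ.zpow_mem_Smono _) hfr0
    · rw [a_succ, a]
      have := Smono_strictMono (Γ.zpow_mem_Smono (⌊y⌋ : ℤ)) hfr1
      calc (Γ.T ^ (⌊y⌋:ℤ)) ((y - ⌊y⌋) * Γ.T 0) < (Γ.T ^ (⌊y⌋:ℤ)) (Γ.T 0) := this
        _ = (Γ.T ^ ((⌊y⌋:ℤ) + 1)) 0 := by
            conv_lhs => rw [show Γ.T 0 = (Γ.T ^ (1:ℤ)) 0 by rw [zpow_one]]
            rw [zpow_apply_zpow]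
        _ = Γ.T ((Γ.T ^ (⌊y⌋:ℤ)) 0) := Γ.a_succ ⌊y⌋
  rw [psi, hN, zpow_neg_apply_zpow, mul_div_assoc, div_self (ne_of_gt Γ.T0_pos), mul_one]
  ring

lemma psi_continuous : Continuous Γ.psi :=
  (OrderIso.toHomeomorph
    (StrictMono.orderIsoOfSurjective Γ.psi Γ.psi_strictMono Γ.psi_surjective)).continuous

lemma psi_Tinv (x : ℝ) : Γ.psi (Γ.T⁻¹ x) = Γ.psi x - 1 := by
  have := Γ.psi_T (Γ.T⁻¹ x)
  rw [happly_inv_apply] at this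
  linarith

lemma psi_le_of_mem {g : ℝ ≃ₜ ℝ} (hg : g ∈ Γ.S) (z : ℝ) : Γ.psi (g z) ≤ Γ.psi z + 1 := by
  have h1 := Γ.psi_strictMono.monotone (Γ.le_T hg z)
  rwa [psi_T] at h1

lemma psi_ge_of_mem {g : ℝ ≃ₜ ℝ} (hg : g ∈ Γ.S) (z : ℝ) : Γ.psi z - 1 ≤ Γ.psi (g z) := by
  have h1 := Γ.psi_strictMono.monotone (Γ.Tinv_le hg z)
  rwa [psi_Tinv] at h1

end Gen

namespace Gen

variable (Γ : Gen)

/-- inverse of the product of a word of generators -/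
def pw {n : ℕ} (w : Fin n → {g // g ∈ Γ.S}) : ℝ ≃ₜ ℝ :=
  ((List.ofFn (fun i => (w i : ℝ ≃ₜ ℝ))).prod)⁻¹

lemma pw_mem_Smono {n : ℕ} (w : Fin n → {g // g ∈ Γ.S}) : Γ.pw w ∈ Smono := by
  apply inv_mem
  apply list_prod_mem
  intro g hg
  obtain ⟨i, rfl⟩ := List.mem_ofFn.1 hg
  exact Γ.hmonoS _ (w i).2

lemma pw_zero (w : Fin 0 → {g // g ∈ Γ.S}) (x : ℝ) : Γ.pw w x = x := by
  rw [pw]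
  simp only [List.ofFn_zero, List.prod_nil, inv_one]
  exact hone_apply x

lemma pw_cons {n : ℕ} (s : {g // g ∈ Γ.S}) (w : Fin n → {g // g ∈ Γ.S}) (x : ℝ) :
    Γ.pw (Fin.cons s w) x = Γ.pw w (((s : ℝ ≃ₜ ℝ))⁻¹ x) := by
  rw [pw, pw, List.ofFn_succ]
  simp only [Fin.cons_zero, Fin.cons_succ]
  rw [List.prod_cons, mul_inv_rev, hmul_apply]

lemma psi_pw_bound {n : ℕ} (w : Fin n → {g // g ∈ Γ.S}) (x : ℝ) :
    Γ.psi x - n ≤ Γ.psi (Γ.pw w x) ∧ Γ.psi (Γ.pw w x) ≤ Γ.psi x + n := by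
  induction n generalizing x with
  | zero => rw [Γ.pw_zero]; norm_num
  | succ m ih =>
      rw [← Fin.cons_self_tail w, Γ.pw_cons]
      have hs : ((w 0 : ℝ ≃ₜ ℝ))⁻¹ ∈ Γ.S := Γ.hinvS _ (w 0).2
      have h1 := Γ.psi_le_of_mem hs x
      have h2 := Γ.psi_ge_of_mem hs x
      obtain ⟨ih1, ih2⟩ := ih (Fin.tail w) (((w 0 : ℝ ≃ₜ ℝ))⁻¹ x)
      constructor
      · push_cast; linarith
      · push_cast; linarith

/-- the basic word sums -/
def E (n : ℕ) (x y : ℝ) : ℝ :=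
  ∑ w : Fin n → {g // g ∈ Γ.S}, (Γ.psi (Γ.pw w x) - Γ.psi (Γ.pw w y))

def c : ℝ := (Γ.S.card : ℝ)

lemma c_ge_one : 1 ≤ Γ.c := by
  rw [c]
  exact_mod_cast Finset.card_pos.2 Γ.hne

lemma c_pos : 0 < Γ.c := lt_of_lt_of_le one_pos Γ.c_ge_one

def wt (n : ℕ) : ℝ := (2:ℝ)⁻¹ ^ (n+1) * (Γ.c)⁻¹ ^ n

lemma wt_pos (n : ℕ) : 0 < Γ.wt n :=
  mul_pos (pow_pos (by norm_num) _) (pow_pos (inv_pos.2 Γ.c_pos) _)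

lemma wt_succ (n : ℕ) : Γ.wt n = 2 * Γ.c * Γ.wt (n+1) := by
  have hc := ne_of_gt Γ.c_pos
  rw [wt, wt, pow_succ, pow_succ]
  field_simp
  ring_nf
  simp [hc]

lemma card_words (n : ℕ) : (Fintype.card (Fin n → {g // g ∈ Γ.S}) : ℝ) = Γ.c ^ n := by
  rw [Fintype.card_fun, Fintype.card_coe, Fintype.card_fin, c]
  push_cast
  ring

lemma E_abs_le (n : ℕ) (x y : ℝ) : |Γ.E n x y| ≤ Γ.c ^ n * (|Γ.psi x - Γ.psi y| + 2 * n) := by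
  rw [E]
  calc |∑ w : Fin n → {g // g ∈ Γ.S}, (Γ.psi (Γ.pw w x) - Γ.psi (Γ.pw w y))|
      ≤ ∑ w : Fin n → {g // g ∈ Γ.S}, |Γ.psi (Γ.pw w x) - Γ.psi (Γ.pw w y)| :=
        Finset.abs_sum_le_sum_abs _ _
    _ ≤ ∑ _w : Fin n → {g // g ∈ Γ.S}, (|Γ.psi x - Γ.psi y| + 2 * n) := by
        apply Finset.sum_le_sum
        intro w _
        obtain ⟨h1, h2⟩ := Γ.psi_pw_bound w x
        obtain ⟨h3, h4⟩ := Γ.psi_pw_bound w y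
        have h5 := le_abs_self (Γ.psi x - Γ.psi y)
        have h6 := neg_abs_le (Γ.psi x - Γ.psi y)
        rw [abs_le]
        constructor <;> linarith
    _ = Γ.c ^ n * (|Γ.psi x - Γ.psi y| + 2 * n) := by
        rw [Finset.sum_const, Finset.card_univ, nsmul_eq_mul, card_words]

lemma E_nonneg {x y : ℝ} (hxy : y ≤ x) (n : ℕ) : 0 ≤ Γ.E n x y := by
  apply Finset.sum_nonneg
  intro w _
  have := Smono_mono (Γ.pw_mem_Smono w) hxy
  have := Γ.psi_strictMono.monotone this
  linarith

lemma E_add (n : ℕ) (x y z : ℝ) : Γ.E n x y + Γ.E n y z = Γ.E n x z := by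
  rw [E, E, E, ← Finset.sum_add_distrib]
  apply Finset.sum_congr rfl
  intro w _
  ring

lemma E_zero_eq (x y : ℝ) : Γ.E 0 x y = Γ.psi x - Γ.psi y := by
  rw [E]
  rw [Finset.sum_eq_single_of_mem (Fin.elim0) (Finset.mem_univ _)]
  · rw [Γ.pw_zero, Γ.pw_zero]
  · intro w _ hw
    exact absurd (funext (fun i => i.elim0)) hw

end Gen

lemma summable_geom_half : Summable (fun n : ℕ => ((2:ℝ)⁻¹) ^ n) :=
  summable_geometric_of_lt_one (by norm_num) (by norm_num)

lemma summable_n_geom_half : Summable (fun n : ℕ => (n : ℝ) * ((2:ℝ)⁻¹) ^ n) := by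
  have := summable_pow_mul_geometric_of_norm_lt_one (R := ℝ) 1 (r := (2:ℝ)⁻¹)
    (by rw [norm_inv]; norm_num)
  simpa using this

lemma summable_aux (A : ℝ) : Summable (fun n : ℕ => ((2:ℝ)⁻¹) ^ (n+1) * (A + 2 * n)) := by
  have h := (summable_geom_half.mul_left (A * 2⁻¹)).add summable_n_geom_half
  apply h.congr
  intro n
  rw [pow_succ]
  ring

lemma tsum_geom_half : ∑' n : ℕ, ((2:ℝ)⁻¹) ^ n = 2 := by
  rw [tsum_geometric_of_lt_one (by norm_num) (by norm_num)]
  norm_num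

lemma tsum_n_geom_half : ∑' n : ℕ, (n : ℝ) * ((2:ℝ)⁻¹) ^ n = 2 := by
  have := tsum_coe_mul_geometric_of_norm_lt_one (𝕜 := ℝ) (r := (2:ℝ)⁻¹)
    (by rw [norm_inv]; norm_num)
  rw [this]
  norm_num

lemma tsum_aux (A : ℝ) : ∑' n : ℕ, ((2:ℝ)⁻¹) ^ (n+1) * (A + 2 * n) = A + 2 := by
  have h1 := summable_geom_half.mul_left (A * 2⁻¹)
  have h2 := summable_n_geom_half
  have heq : (fun n : ℕ => ((2:ℝ)⁻¹) ^ (n+1) * (A + 2 * n)) =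
      fun n : ℕ => (A * 2⁻¹) * ((2:ℝ)⁻¹) ^ n + (n : ℝ) * ((2:ℝ)⁻¹) ^ n := by
    funext n
    rw [pow_succ]
    ring
  rw [heq, Summable.tsum_add h1 h2, tsum_mul_left, tsum_geom_half, tsum_n_geom_half]
  ring

namespace Gen

variable (Γ : Gen)

lemma wt_mul_pow (n : ℕ) : Γ.wt n * Γ.c ^ n = ((2:ℝ)⁻¹) ^ (n+1) := by
  rw [wt, mul_assoc, ← mul_pow, inv_mul_cancel₀ (ne_of_gt Γ.c_pos), one_pow, mul_one]

lemma wt_E_abs_le (n : ℕ) (x y : ℝ) :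
    |Γ.wt n * Γ.E n x y| ≤ ((2:ℝ)⁻¹) ^ (n+1) * (|Γ.psi x - Γ.psi y| + 2 * n) := by
  rw [abs_mul, abs_of_pos (Γ.wt_pos n)]
  calc Γ.wt n * |Γ.E n x y| ≤ Γ.wt n * (Γ.c ^ n * (|Γ.psi x - Γ.psi y| + 2 * n)) :=
        mul_le_mul_of_nonneg_left (Γ.E_abs_le n x y) (Γ.wt_pos n).le
    _ = ((2:ℝ)⁻¹) ^ (n+1) * (|Γ.psi x - Γ.psi y| + 2 * n) := by
        rw [← mul_assoc, wt_mul_pow]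

lemma summable_wtE (x y : ℝ) : Summable (fun n => Γ.wt n * Γ.E n x y) := by
  apply Summable.of_norm_bounded (summable_aux (|Γ.psi x - Γ.psi y|))
  intro n
  rw [Real.norm_eq_abs]
  exact Γ.wt_E_abs_le n x y

/-- The conjugating series. -/
def Phi (x y : ℝ) : ℝ := ∑' n, Γ.wt n * Γ.E n x y

lemma Phi_add (x y z : ℝ) : Γ.Phi x y + Γ.Phi y z = Γ.Phi x z := by
  rw [Phi, Phi, Phi, ← Summable.tsum_add (Γ.summable_wtE x y) (Γ.summable_wtE y z)]
  apply tsum_congr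
  intro n
  rw [← Γ.E_add n x y z]
  ring

lemma Phi_self (x : ℝ) : Γ.Phi x x = 0 := by
  rw [Phi]
  convert tsum_zero with n
  rw [E, Finset.sum_eq_zero (fun w _ => sub_self _), mul_zero]

lemma Phi_anti (x y : ℝ) : Γ.Phi x y = - Γ.Phi y x := by
  have := Γ.Phi_add x y x
  rw [Γ.Phi_self x] at this
  linarith

lemma Phi_lower {x y : ℝ} (hxy : y ≤ x) : (Γ.psi x - Γ.psi y) / 2 ≤ Γ.Phi x y := by
  have h0 : Γ.wt 0 * Γ.E 0 x y = (Γ.psi x - Γ.psi y) / 2 := by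
    rw [Γ.E_zero_eq, wt]
    norm_num
    ring
  rw [Phi, ← h0]
  apply Summable.le_tsum (Γ.summable_wtE x y) 0
  intro i _
  exact mul_nonneg (Γ.wt_pos i).le (Γ.E_nonneg hxy i)

lemma Phi_nonneg {x y : ℝ} (hxy : y ≤ x) : 0 ≤ Γ.Phi x y := by
  have := Γ.Phi_lower hxy
  have := Γ.psi_strictMono.monotone hxy
  linarith

lemma Phi_pos {x y : ℝ} (hxy : y < x) : 0 < Γ.Phi x y := by
  have := Γ.Phi_lower hxy.le
  have := Γ.psi_strictMono hxy
  linarith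

lemma Phi_upper {x y : ℝ} (hxy : y ≤ x) : Γ.Phi x y ≤ (Γ.psi x - Γ.psi y) + 2 := by
  have hps : 0 ≤ Γ.psi x - Γ.psi y := by
    have := Γ.psi_strictMono.monotone hxy
    linarith
  rw [Phi]
  calc ∑' n : ℕ, Γ.wt n * Γ.E n x y
      ≤ ∑' n : ℕ, ((2:ℝ)⁻¹) ^ (n+1) * ((Γ.psi x - Γ.psi y) + 2 * (n:ℝ)) := by
        apply Summable.tsum_le_tsum _ (Γ.summable_wtE x y) (summable_aux _)
        intro n
        have h1 := Γ.wt_E_abs_le n x y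
        rw [abs_of_nonneg hps] at h1
        exact le_trans (le_abs_self _) h1
    _ = (Γ.psi x - Γ.psi y) + 2 := tsum_aux _

lemma Phi_abs_le (x y : ℝ) : |Γ.Phi x y| ≤ |Γ.psi x - Γ.psi y| + 2 := by
  rcases le_total y x with h | h
  · have h1 := Γ.Phi_nonneg h
    have h2 := Γ.Phi_upper h
    have h3 : 0 ≤ Γ.psi x - Γ.psi y := by
      have := Γ.psi_strictMono.monotone h
      linarith
    rw [abs_of_nonneg h1, abs_of_nonneg h3]
    exact h2
  · have h1 := Γ.Phi_nonneg h
    have h2 := Γ.Phi_upper h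
    have h3 : 0 ≤ Γ.psi y - Γ.psi x := by
      have := Γ.psi_strictMono.monotone h
      linarith
    rw [Γ.Phi_anti, abs_neg, abs_of_nonneg h1, abs_sub_comm, abs_of_nonneg h3]
    exact h2

lemma E_reindex {g : ℝ ≃ₜ ℝ} (hg : g ∈ Γ.S) {x y : ℝ} (hxy : y ≤ x) (n : ℕ) :
    Γ.E n (g x) (g y) ≤ Γ.E (n+1) x y := by
  classical
  set s : {g // g ∈ Γ.S} := ⟨g⁻¹, Γ.hinvS g hg⟩ with hs
  set ι : (Fin n → {g // g ∈ Γ.S}) → (Fin (n+1) → {g // g ∈ Γ.S}) :=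
    fun w => Fin.cons s w with hι
  have key : ∀ (w : Fin n → {g // g ∈ Γ.S}) (z : ℝ),
      Γ.pw (ι w) z = Γ.pw w (g z) := by
    intro w z
    rw [hι]
    simp only []
    rw [Γ.pw_cons]
    show Γ.pw w ((g⁻¹)⁻¹ z) = Γ.pw w (g z)
    rw [inv_inv]
  have hinj : ∀ w₁ ∈ (Finset.univ : Finset (Fin n → {g // g ∈ Γ.S})), ∀ w₂ ∈ Finset.univ,
      ι w₁ = ι w₂ → w₁ = w₂ := by
    intro w₁ _ w₂ _ h
    funext i
    have h2 := congrFun h i.succ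
    rw [hι] at h2
    simp only [] at h2
    rwa [Fin.cons_succ, Fin.cons_succ] at h2
  have himg := Finset.sum_image (f := fun v : Fin (n+1) → {g // g ∈ Γ.S} =>
    Γ.psi (Γ.pw v x) - Γ.psi (Γ.pw v y)) hinj
  rw [E, E]
  have hEq : ∑ w : Fin n → {g // g ∈ Γ.S}, (Γ.psi (Γ.pw w (g x)) - Γ.psi (Γ.pw w (g y)))
      = ∑ v ∈ Finset.univ.image ι,
        (Γ.psi (Γ.pw v x) - Γ.psi (Γ.pw v y)) := by
    rw [himg]
    apply Finset.sum_congr rfl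
    intro w _
    rw [← key w x, ← key w y]
  rw [hEq]
  apply Finset.sum_le_sum_of_subset_of_nonneg (Finset.subset_univ _)
  intro v _ _
  have h1 := Γ.psi_strictMono.monotone (Smono_mono (Γ.pw_mem_Smono v) hxy)
  linarith

lemma tsum_shift_le {f : ℕ → ℝ} (hf : Summable f) (h0 : 0 ≤ f 0) :
    ∑' n, f (n+1) ≤ ∑' n, f n := by
  rw [Summable.tsum_eq_zero_add hf]
  linarith

lemma Phi_lip {g : ℝ ≃ₜ ℝ} (hg : g ∈ Γ.S) {x y : ℝ} (hxy : y ≤ x) :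
    Γ.Phi (g x) (g y) ≤ 2 * Γ.c * Γ.Phi x y := by
  have hshift : Summable (fun n => Γ.wt (n+1) * Γ.E (n+1) x y) :=
    (summable_nat_add_iff (f := fun n => Γ.wt n * Γ.E n x y) 1).2 (Γ.summable_wtE x y)
  have h1 : ∀ n, Γ.wt n * Γ.E n (g x) (g y) ≤ (2 * Γ.c) * (Γ.wt (n+1) * Γ.E (n+1) x y) := by
    intro n
    calc Γ.wt n * Γ.E n (g x) (g y) ≤ Γ.wt n * Γ.E (n+1) x y :=
          mul_le_mul_of_nonneg_left (Γ.E_reindex hg hxy n) (Γ.wt_pos n).le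
      _ = (2 * Γ.c) * (Γ.wt (n+1) * Γ.E (n+1) x y) := by
          rw [Γ.wt_succ n]; ring
  rw [Phi, Phi]
  calc ∑' n : ℕ, Γ.wt n * Γ.E n (g x) (g y)
      ≤ ∑' n : ℕ, (2 * Γ.c) * (Γ.wt (n+1) * Γ.E (n+1) x y) :=
        Summable.tsum_le_tsum h1 (Γ.summable_wtE _ _) (hshift.mul_left _)
    _ = (2 * Γ.c) * ∑' n : ℕ, Γ.wt (n+1) * Γ.E (n+1) x y := tsum_mul_left
    _ ≤ (2 * Γ.c) * ∑' n : ℕ, Γ.wt n * Γ.E n x y := by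
        apply mul_le_mul_of_nonneg_left _ (by have := Γ.c_pos; linarith)
        exact Gen.tsum_shift_le (Γ.summable_wtE x y)
          (mul_nonneg (Γ.wt_pos 0).le (Γ.E_nonneg hxy 0))

end Gen

namespace Gen

variable (Γ : Gen)

lemma psi_a (n : ℤ) : Γ.psi (Γ.a n) = n := by
  have hN : Γ.N (Γ.a n) = n := Γ.N_eq (le_refl _) (Γ.a_strictMono (by omega))
  rw [psi, hN, a, zpow_neg_apply_zpow, zero_div, add_zero]

lemma psi_zero : Γ.psi 0 = 0 := by
  have := Γ.psi_a 0
  rw [a, zpow_zero] at this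
  rw [show ((1:ℝ≃ₜℝ)) 0 = 0 from rfl] at this
  exact_mod_cast this

/-- The conjugating map. -/
def phi (x : ℝ) : ℝ := Γ.Phi x 0

lemma phi_sub (x y : ℝ) : Γ.phi x - Γ.phi y = Γ.Phi x y := by
  have := Γ.Phi_add x y 0
  rw [phi, phi]
  linarith

lemma phi_zero : Γ.phi 0 = 0 := Γ.Phi_self 0

lemma phi_strictMono : StrictMono Γ.phi := by
  intro u v huv
  have h1 := Γ.Phi_pos huv
  have h2 := Γ.phi_sub v u
  linarith

lemma phi_continuous : Continuous Γ.phi := by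
  rw [continuous_iff_continuousAt]
  intro x₀
  set R : ℝ := |x₀| + 1 with hR
  set M : ℝ := |Γ.psi R - Γ.psi 0| + |Γ.psi (-R) - Γ.psi 0| with hM
  have hRpos : 0 < R := by positivity
  have hbound : ∀ (n : ℕ) (x : ℝ), x ∈ Set.Ioo (-R) R →
      ‖Γ.wt n * Γ.E n x 0‖ ≤ ((2:ℝ)⁻¹) ^ (n+1) * (M + 2 * n) := by
    intro n x hx
    have h1 : |Γ.psi x - Γ.psi 0| ≤ M := by
      have h2 := Γ.psi_strictMono.monotone hx.1.le
      have h3 := Γ.psi_strictMono.monotone hx.2.le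
      have h4 := le_abs_self (Γ.psi R - Γ.psi 0)
      have h5 := neg_abs_le (Γ.psi (-R) - Γ.psi 0)
      have h6 := abs_nonneg (Γ.psi R - Γ.psi 0)
      have h7 := abs_nonneg (Γ.psi (-R) - Γ.psi 0)
      rw [hM, abs_le]
      constructor <;> linarith
    calc ‖Γ.wt n * Γ.E n x 0‖ ≤ ((2:ℝ)⁻¹) ^ (n+1) * (|Γ.psi x - Γ.psi 0| + 2 * n) := by
          rw [Real.norm_eq_abs]; exact Γ.wt_E_abs_le n x 0
      _ ≤ ((2:ℝ)⁻¹) ^ (n+1) * (M + 2 * n) := by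
          apply mul_le_mul_of_nonneg_left _ (by positivity)
          linarith
  have hunif := tendstoUniformlyOn_tsum (summable_aux M) hbound
  have hterm : ∀ n : ℕ, Continuous (fun x => Γ.wt n * Γ.E n x 0) := by
    intro n
    apply Continuous.mul continuous_const
    rw [show (fun x => Γ.E n x 0) = fun x =>
      ∑ w : Fin n → {g // g ∈ Γ.S}, (Γ.psi (Γ.pw w x) - Γ.psi (Γ.pw w 0)) from rfl]
    apply continuous_finset_sum
    intro w _
    exact ((Γ.psi_continuous.comp (Γ.pw w).continuous).sub continuous_const)
  have hcontOn : ContinuousOn Γ.phi (Set.Ioo (-R) R) := by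
    apply hunif.continuousOn
    apply Filter.Eventually.frequently
    filter_upwards with N
    apply continuous_finset_sum _ (fun n _ => hterm n) |>.continuousOn
  have hmem : x₀ ∈ Set.Ioo (-R) R := by
    constructor
    · have := neg_abs_le x₀; rw [hR]; linarith
    · have := le_abs_self x₀; rw [hR]; linarith
  exact hcontOn.continuousAt (isOpen_Ioo.mem_nhds hmem)

lemma phi_a_lower {n : ℤ} (hn : 0 ≤ n) : (n : ℝ) / 2 ≤ Γ.phi (Γ.a n) := by
  have h0 : Γ.a 0 = 0 := by rw [a, zpow_zero]; rfl
  have h1 : (0:ℝ) ≤ Γ.a n := by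
    rw [← h0]; exact Γ.a_strictMono.monotone hn
  have h2 := Γ.Phi_lower (x := Γ.a n) (y := 0) h1
  rw [Γ.psi_zero, Γ.psi_a] at h2
  rw [phi]
  linarith

lemma phi_a_upper {n : ℤ} (hn : n ≤ 0) : Γ.phi (Γ.a n) ≤ (n : ℝ) / 2 := by
  have h0 : Γ.a 0 = 0 := by rw [a, zpow_zero]; rfl
  have h1 : Γ.a n ≤ 0 := by
    rw [← h0]; exact Γ.a_strictMono.monotone hn
  have h2 := Γ.Phi_lower (x := 0) (y := Γ.a n) h1
  rw [Γ.psi_zero, Γ.psi_a] at h2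
  have h3 := Γ.Phi_anti 0 (Γ.a n)
  rw [phi]
  linarith

lemma phi_surjective : Function.Surjective Γ.phi := by
  intro y
  set n₁ : ℤ := ⌈2 * |y|⌉ with hn₁
  have hn₁0 : 0 ≤ n₁ := Int.ceil_nonneg (by positivity)
  have hy1 : y ≤ Γ.phi (Γ.a n₁) := by
    have := Γ.phi_a_lower hn₁0
    have h2 := Int.le_ceil (2 * |y|)
    have h3 := le_abs_self y
    linarith
  have hy2 : Γ.phi (Γ.a (-n₁)) ≤ y := by
    have := Γ.phi_a_upper (by omega : -n₁ ≤ 0)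
    have h2 := Int.le_ceil (2 * |y|)
    have h3 := neg_abs_le y
    push_cast at this ⊢
    linarith
  have hle : Γ.a (-n₁) ≤ Γ.a n₁ := Γ.a_strictMono.monotone (by omega)
  have := intermediate_value_Icc hle Γ.phi_continuous.continuousOn
  obtain ⟨x, _, hx⟩ := this ⟨hy2, hy1⟩
  exact ⟨x, hx⟩

/-- The conjugating homeomorphism. -/
def phiH : ℝ ≃ₜ ℝ :=
  (StrictMono.orderIsoOfSurjective Γ.phi Γ.phi_strictMono Γ.phi_surjective).toHomeomorph

lemma phiH_apply (x : ℝ) : Γ.phiH x = Γ.phi x := rfl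

lemma phi_symm_apply (x : ℝ) : Γ.phi (Γ.phiH.symm x) = x := Γ.phiH.apply_symm_apply x

end Gen

namespace Gen

variable (Γ : Gen)

lemma Phi_g_abs {g : ℝ ≃ₜ ℝ} (hg : g ∈ Γ.S) (z : ℝ) : |Γ.Phi (g z) z| ≤ 3 := by
  have h1 := Γ.Phi_abs_le (g z) z
  have h2 := Γ.psi_le_of_mem hg z
  have h3 := Γ.psi_ge_of_mem hg z
  have h4 : |Γ.psi (g z) - Γ.psi z| ≤ 1 := abs_le.2 ⟨by linarith, by linarith⟩
  linarith

lemma master : ∃ (φ : ℝ ≃ₜ ℝ) (K C D : ℝ),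
    1 ≤ K ∧ 0 < C ∧ C < D ∧
    (∀ g ∈ Γ.S, ∀ x y : ℝ,
      K⁻¹ * |y - x| ≤ |φ (g (φ.symm y)) - φ (g (φ.symm x))| ∧
      |φ (g (φ.symm y)) - φ (g (φ.symm x))| ≤ K * |y - x|) ∧
    (∀ x : ℝ,
      (∀ g ∈ Γ.S, x - D ≤ φ (g (φ.symm x))) ∧ (∃ g ∈ Γ.S, φ (g (φ.symm x)) ≤ x - C) ∧
      (∃ g ∈ Γ.S, x + C ≤ φ (g (φ.symm x))) ∧ (∀ g ∈ Γ.S, φ (g (φ.symm x)) ≤ x + D)) := by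
  have hc := Γ.c_ge_one
  have h2c : (0:ℝ) < 2 * Γ.c := by linarith
  have key : ∀ g ∈ Γ.S, ∀ x y : ℝ, x ≤ y →
      0 ≤ Γ.phiH (g (Γ.phiH.symm y)) - Γ.phiH (g (Γ.phiH.symm x)) ∧
      (2 * Γ.c)⁻¹ * (y - x) ≤ Γ.phiH (g (Γ.phiH.symm y)) - Γ.phiH (g (Γ.phiH.symm x)) ∧
      Γ.phiH (g (Γ.phiH.symm y)) - Γ.phiH (g (Γ.phiH.symm x)) ≤ 2 * Γ.c * (y - x) := by
    intro g hg x y hxy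
    set u := Γ.phiH.symm x with hu
    set v := Γ.phiH.symm y with hv
    have hphiu : Γ.phi u = x := Γ.phi_symm_apply x
    have hphiv : Γ.phi v = y := Γ.phi_symm_apply y
    have huv : u ≤ v := by
      by_contra hcon
      push_neg at hcon
      have := Γ.phi_strictMono hcon
      rw [hphiu, hphiv] at this
      linarith
    have hguv : g u ≤ g v := Γ.hmonoS g hg huv
    have hdiff : Γ.phiH (g v) - Γ.phiH (g u) = Γ.Phi (g v) (g u) := by
      rw [phiH_apply, phiH_apply, phi_sub]
    have hyx : y - x = Γ.Phi v u := by
      rw [← hphiu, ← hphiv, phi_sub]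
    have hupper := Γ.Phi_lip hg huv
    have hlower := Γ.Phi_lip (Γ.hinvS g hg) hguv
    rw [hinv_apply_apply, hinv_apply_apply] at hlower
    have hnn := Γ.Phi_nonneg hguv
    refine ⟨by rw [hdiff]; exact hnn, ?_, ?_⟩
    · rw [hdiff, hyx]
      rw [inv_mul_le_iff₀ h2c]
      exact hlower
    · rw [hdiff, hyx]
      exact hupper
  refine ⟨Γ.phiH, 2 * Γ.c, 1/2, 3, by linarith, by norm_num, by norm_num, ?_, ?_⟩
  · intro g hg x y
    rcases le_total x y with h | h
    · obtain ⟨h0, h1, h2⟩ := key g hg x y h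
      rw [abs_of_nonneg (by linarith : (0:ℝ) ≤ y - x), abs_of_nonneg h0]
      exact ⟨h1, h2⟩
    · obtain ⟨h0, h1, h2⟩ := key g hg y x h
      rw [show |y - x| = x - y by rw [abs_sub_comm]; exact abs_of_nonneg (by linarith),
        abs_sub_comm, abs_of_nonneg h0]
      exact ⟨h1, h2⟩
  · intro x
    set z := Γ.phiH.symm x with hz
    have hphiz : Γ.phi z = x := Γ.phi_symm_apply x
    have habs : ∀ g ∈ Γ.S, |Γ.phiH (g z) - x| ≤ 3 := by
      intro g hg
      rw [phiH_apply, ← hphiz, phi_sub]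
      exact Γ.Phi_g_abs hg z
    refine ⟨?_, ?_, ?_, ?_⟩
    · intro g hg
      have h1 := habs g hg
      have h2 := neg_abs_le (Γ.phiH (g z) - x)
      rw [abs_le] at h1
      linarith [h1.1]
    · obtain ⟨g₀, hg₀, heq⟩ := Γ.exists_sup_attained (Γ.T⁻¹ z)
      rw [happly_inv_apply] at heq
      refine ⟨g₀⁻¹, Γ.hinvS _ hg₀, ?_⟩
      have hval : (g₀⁻¹) z = Γ.T⁻¹ z := by
        conv_lhs => rw [← heq]
        rw [hinv_apply_apply]
      rw [phiH_apply, hval]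
      have hlow := Γ.Phi_lower (x := z) (y := Γ.T⁻¹ z) (Γ.Tinv_lt z).le
      rw [Γ.psi_Tinv] at hlow
      have heq2 : Γ.phi (Γ.T⁻¹ z) - x = Γ.Phi (Γ.T⁻¹ z) z := by
        rw [← hphiz, phi_sub]
      have hanti := Γ.Phi_anti (Γ.T⁻¹ z) z
      have : Γ.Phi z (Γ.T⁻¹ z) ≥ 1/2 := by linarith
      linarith
    · obtain ⟨g₀, hg₀, heq⟩ := Γ.exists_sup_attained z
      refine ⟨g₀, hg₀, ?_⟩
      rw [phiH_apply, heq]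
      have hlow := Γ.Phi_lower (x := Γ.T z) (y := z) (Γ.lt_T z).le
      rw [Γ.psi_T] at hlow
      have heq2 : Γ.phi (Γ.T z) - x = Γ.Phi (Γ.T z) z := by
        rw [← hphiz, phi_sub]
      linarith
    · intro g hg
      have h1 := habs g hg
      rw [abs_le] at h1
      linarith [h1.2]

end Gen

/-- Every action of a finitely generated group on `ℝ` by orientation-preserving
homeomorphisms without global fixed point is topologically conjugated to an action `ρ`
by bilipschitz homeomorphisms for which there are `K ≥ 1`, `0 < C < D` and a finite
symmetric generating set `𝒢'` with each `ρ(g)`, `g ∈ 𝒢'`, `K`-bilipschitz and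
`x - D ≤ min_{g∈𝒢'} ρ(g)(x) ≤ x - C` and `x + C ≤ max_{g∈𝒢'} ρ(g)(x) ≤ x + D`. -/
theorem conjugate_to_uniformly_displacing_bilipschitz (G : Subgroup (ℝ ≃ₜ ℝ))
    (hFG : Group.FG G) (hmono : ∀ g ∈ G, Monotone ⇑g)
    (hnofix : ∀ p : ℝ, ∃ g ∈ G, g p ≠ p) :
    ∃ (φ : ℝ ≃ₜ ℝ) (K C D : ℝ) (S : Finset (ℝ ≃ₜ ℝ)),
      1 ≤ K ∧ 0 < C ∧ C < D ∧
      (↑S ⊆ (G : Set (ℝ ≃ₜ ℝ))) ∧ (∀ g ∈ S, g⁻¹ ∈ S) ∧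
      Subgroup.closure (S : Set (ℝ ≃ₜ ℝ)) = G ∧
      (∀ g ∈ S, ∀ x y : ℝ,
        K⁻¹ * |y - x| ≤ |φ (g (φ.symm y)) - φ (g (φ.symm x))| ∧
        |φ (g (φ.symm y)) - φ (g (φ.symm x))| ≤ K * |y - x|) ∧
      (∀ x : ℝ,
        (∀ g ∈ S, x - D ≤ φ (g (φ.symm x))) ∧ (∃ g ∈ S, φ (g (φ.symm x)) ≤ x - C) ∧
        (∃ g ∈ S, x + C ≤ φ (g (φ.symm x))) ∧ (∀ g ∈ S, φ (g (φ.symm x)) ≤ x + D)) := by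
  classical
  obtain ⟨S₀, hS₀⟩ : G.FG := (Group.fg_iff_subgroup_fg G).1 hFG
  set S : Finset (ℝ ≃ₜ ℝ) := S₀ ∪ S₀.image (·⁻¹) with hSdef
  have hS₀sub : (S₀ : Set (ℝ ≃ₜ ℝ)) ⊆ (G : Set (ℝ ≃ₜ ℝ)) := by
    rw [← hS₀]
    exact Subgroup.subset_closure
  have hsub : (S : Set (ℝ ≃ₜ ℝ)) ⊆ (G : Set (ℝ ≃ₜ ℝ)) := by
    intro g hg
    rw [hSdef] at hg
    simp only [Finset.coe_union, Set.mem_union, Finset.coe_image, Set.mem_image] at hg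
    rcases hg with hg | ⟨h, hh, rfl⟩
    · exact hS₀sub hg
    · exact inv_mem (hS₀sub hh)
  have hinvS : ∀ g ∈ S, g⁻¹ ∈ S := by
    intro g hg
    rw [hSdef, Finset.mem_union] at hg ⊢
    rcases hg with hg | hg
    · right
      exact Finset.mem_image_of_mem _ hg
    · left
      obtain ⟨h, hh, rfl⟩ := Finset.mem_image.1 hg
      rwa [inv_inv]
  have hclosure : Subgroup.closure (S : Set (ℝ ≃ₜ ℝ)) = G := by
    apply le_antisymm
    · exact (Subgroup.closure_le G).2 hsub
    · rw [← hS₀]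
      apply Subgroup.closure_mono
      rw [hSdef]
      simp only [Finset.coe_union]
      exact Set.subset_union_left
  have hmonoS : ∀ g ∈ S, Monotone ⇑g := fun g hg => hmono g (hsub hg)
  have hmove : ∀ z : ℝ, ∃ g ∈ S, z < g z := by
    intro z
    by_contra hcon
    push_neg at hcon
    have hfix : ∀ g ∈ S, g z = z := by
      intro g hg
      refine le_antisymm (hcon g hg) ?_
      have h1 := hcon g⁻¹ (hinvS g hg)
      have h2 := hmonoS g hg h1
      rwa [happly_inv_apply] at h2
    set St : Subgroup (ℝ ≃ₜ ℝ) :=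
      { carrier := {h : ℝ ≃ₜ ℝ | h z = z}
        mul_mem' := by
          intro p q hp hq
          show (p * q) z = z
          rw [hmul_apply, hq, hp]
        one_mem' := rfl
        inv_mem' := by
          intro p hp
          show p⁻¹ z = z
          conv_lhs => rw [← hp]
          rw [hinv_apply_apply] } with hSt
    have hGle : G ≤ St := by
      rw [← hclosure]
      exact (Subgroup.closure_le St).2 (fun g hg => hfix g hg)
    obtain ⟨g, hgG, hgz⟩ := hnofix z
    exact hgz (hGle hgG)
  have hne : S.Nonempty := by
    obtain ⟨g, hg, _⟩ := hmove 0
    exact ⟨g, hg⟩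
  set Γ : Gen := ⟨S, hne, hmonoS, hinvS, hmove⟩ with hΓ
  obtain ⟨φ, K, C, D, h1, h2, h3, h4, h5⟩ := Γ.master
  exact ⟨φ, K, C, D, S, h1, h2, h3, hsub, hinvS, hclosure, h4, h5⟩
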